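/- Let k and m be natural numbers with m ≤ k, and let w_0, w_1, …, w_m be real numbers. Define f : ℕ → ℝ by f(x) = Σ_{r=0}^{m} w_r · Σ_{j=0}^{r} (−1)^{r−j} · C(2j,j) · C(k−j, r−j) · C(x+j, 2j). Then f(x) is an integer for every x ∈ {0, 1, …, k} if and only if there exist integers c_0, c_1, …, c_m such that for every r ∈ {0, 1, …, m}, w_r = Σ_{j=r}^{m} (c_j / C(2j,j)) · C(k−r, j−r). -/

import Mathlib

open Finset

private lemma sum_isInt {s : Finset ℕ} {g : ℕ → ℝ}
    (h : ∀ i ∈ s, ∃ z : ℤ, g i = (z : ℝ)) : ∃ z : ℤ, ∑ i ∈ s, g i = (z : ℝ) := by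
  classical
  induction s using Finset.induction_on with
  | empty => exact ⟨0, by simp⟩
  | insert _ _ hx ih =>
    obtain ⟨z1, hz1⟩ := h _ (Finset.mem_insert_self _ _)
    obtain ⟨z2, hz2⟩ := ih (fun i hi => h i (Finset.mem_insert_of_mem hi))
    exact ⟨z1 + z2, by rw [Finset.sum_insert hx, hz1, hz2]; push_cast; ring⟩

private lemma alt_sum (n : ℕ) :
    ∑ i ∈ range (n + 1), (-1 : ℝ) ^ i * (n.choose i : ℝ) = if n = 0 then 1 else 0 := by
  rcases eq_or_ne n 0 with h | h
  · subst h; simp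
  · rw [if_neg h]
    have h2 := Int.alternating_sum_range_choose_of_ne h
    exact_mod_cast h2

private lemma alt_sum' (n : ℕ) :
    ∑ i ∈ range (n + 1), (-1 : ℝ) ^ (n - i) * (n.choose i : ℝ) = if n = 0 then 1 else 0 := by
  have key : ∀ i ∈ range (n + 1),
      (-1 : ℝ) ^ (n - i) * (n.choose i : ℝ) = (-1) ^ n * ((-1) ^ i * (n.choose i : ℝ)) := by
    intro i hi
    have hi' : i ≤ n := by simpa [Nat.lt_succ_iff] using hi
    have hpow : (-1 : ℝ) ^ n = (-1) ^ (n - i) * (-1) ^ i := by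
      rw [← pow_add]; congr 1; omega
    have h1 : (-1 : ℝ) ^ i * (-1) ^ i = 1 := by
      rw [← pow_add]
      have h2 : i + i = 2 * i := by omega
      rw [h2, pow_mul]; norm_num
    rw [hpow]
    linear_combination (-((-1 : ℝ) ^ (n - i) * (n.choose i : ℝ))) * h1
  rw [Finset.sum_congr rfl key, ← Finset.mul_sum, alt_sum]
  rcases eq_or_ne n 0 with h | h <;> simp [h]

private lemma delta1 (k a b : ℕ) (hab : a ≤ b) (hbk : b ≤ k) :
    ∑ s ∈ Finset.Icc a b,
      (-1 : ℝ) ^ (s - a) * ((k - a).choose (s - a) : ℝ) * ((k - s).choose (b - s) : ℝ)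
      = if a = b then 1 else 0 := by
  rw [← Finset.Ico_add_one_right_eq_Icc, Finset.sum_Ico_eq_sum_range]
  have hb : b + 1 - a = (b - a) + 1 := by omega
  rw [hb]
  have key : ∀ i ∈ range (b - a + 1),
      (-1 : ℝ) ^ (a + i - a) * ((k - a).choose (a + i - a) : ℝ) *
        ((k - (a + i)).choose (b - (a + i)) : ℝ)
      = ((k - a).choose (b - a) : ℝ) * ((-1) ^ i * ((b - a).choose i : ℝ)) := by
    intro i hi
    have hi' : i ≤ b - a := by simpa [Nat.lt_succ_iff] using hi
    have h1 : a + i - a = i := by omega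
    have h2 : k - (a + i) = k - a - i := by omega
    have h3 : b - (a + i) = b - a - i := by omega
    rw [h1, h2, h3]
    have hc := Nat.choose_mul (n := k - a) (k := b - a) (s := i) hi'
    have hcast : ((k - a).choose i : ℝ) * ((k - a - i).choose (b - a - i) : ℝ)
        = ((k - a).choose (b - a) : ℝ) * ((b - a).choose i : ℝ) := by exact_mod_cast hc.symm
    linear_combination ((-1 : ℝ) ^ i) * hcast
  rw [Finset.sum_congr rfl key, ← Finset.mul_sum, alt_sum]
  rcases eq_or_ne a b with h | h
  · subst h; simp
  · have hne : b - a ≠ 0 := by omega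
    simp [hne, h]

private lemma delta2 (k a b : ℕ) (hab : a ≤ b) (hbk : b ≤ k) :
    ∑ s ∈ Finset.Icc a b,
      (-1 : ℝ) ^ (b - s) * ((k - a).choose (s - a) : ℝ) * ((k - s).choose (b - s) : ℝ)
      = if a = b then 1 else 0 := by
  rw [← Finset.Ico_add_one_right_eq_Icc, Finset.sum_Ico_eq_sum_range]
  have hb : b + 1 - a = (b - a) + 1 := by omega
  rw [hb]
  have key : ∀ i ∈ range (b - a + 1),
      (-1 : ℝ) ^ (b - (a + i)) * ((k - a).choose (a + i - a) : ℝ) *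
        ((k - (a + i)).choose (b - (a + i)) : ℝ)
      = ((k - a).choose (b - a) : ℝ) * ((-1) ^ (b - a - i) * ((b - a).choose i : ℝ)) := by
    intro i hi
    have hi' : i ≤ b - a := by simpa [Nat.lt_succ_iff] using hi
    have h1 : a + i - a = i := by omega
    have h2 : k - (a + i) = k - a - i := by omega
    have h3 : b - (a + i) = b - a - i := by omega
    rw [h1, h2, h3]
    have hc := Nat.choose_mul (n := k - a) (k := b - a) (s := i) hi'
    have hcast : ((k - a).choose i : ℝ) * ((k - a - i).choose (b - a - i) : ℝ)
        = ((k - a).choose (b - a) : ℝ) * ((b - a).choose i : ℝ) := by exact_mod_cast hc.symm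
    linear_combination ((-1 : ℝ) ^ (b - a - i)) * hcast
  rw [Finset.sum_congr rfl key, ← Finset.mul_sum, alt_sum']
  rcases eq_or_ne a b with h | h
  · subst h; simp
  · have hne : b - a ≠ 0 := by omega
    simp [hne, h]

private lemma swapIcc (r m : ℕ) (F : ℕ → ℕ → ℝ) :
    ∑ j ∈ Finset.Icc r m, ∑ s ∈ Finset.Icc j m, F j s
      = ∑ s ∈ Finset.Icc r m, ∑ j ∈ Finset.Icc r s, F j s :=
  Finset.sum_comm' (by intro x y; simp only [Finset.mem_Icc]; omega)

private lemma swapRange (m : ℕ) (F : ℕ → ℕ → ℝ) :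
    ∑ r ∈ range (m + 1), ∑ j ∈ range (r + 1), F r j
      = ∑ j ∈ range (m + 1), ∑ r ∈ Finset.Icc j m, F r j :=
  Finset.sum_comm' (by intro x y; simp only [Finset.mem_range, Finset.mem_Icc]; omega)

private lemma inv1 (k m r : ℕ) (hr : r ≤ m) (hk : m ≤ k) (g : ℕ → ℝ) :
    ∑ j ∈ Finset.Icc r m, ((k - r).choose (j - r) : ℝ) *
      ∑ s ∈ Finset.Icc j m, (-1 : ℝ) ^ (s - j) * ((k - j).choose (s - j) : ℝ) * g s = g r := by
  have h1 : ∀ j ∈ Finset.Icc r m, ((k - r).choose (j - r) : ℝ) *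
      (∑ s ∈ Finset.Icc j m, (-1 : ℝ) ^ (s - j) * ((k - j).choose (s - j) : ℝ) * g s)
      = ∑ s ∈ Finset.Icc j m, ((k - r).choose (j - r) : ℝ) *
          ((-1 : ℝ) ^ (s - j) * ((k - j).choose (s - j) : ℝ) * g s) :=
    fun j _ => Finset.mul_sum _ _ _
  rw [Finset.sum_congr rfl h1, swapIcc]
  have h2 : ∀ s ∈ Finset.Icc r m,
      ∑ j ∈ Finset.Icc r s, ((k - r).choose (j - r) : ℝ) *
        ((-1 : ℝ) ^ (s - j) * ((k - j).choose (s - j) : ℝ) * g s)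
      = (if r = s then 1 else 0) * g s := by
    intro s hs
    simp only [Finset.mem_Icc] at hs
    rw [← delta2 k r s hs.1 (hs.2.trans hk), Finset.sum_mul]
    exact Finset.sum_congr rfl fun j _ => by ring
  rw [Finset.sum_congr rfl h2]
  simp only [ite_mul, one_mul, zero_mul, Finset.sum_ite_eq, Finset.mem_Icc]
  simp [hr]

private lemma inv2 (k m j : ℕ) (hj : j ≤ m) (hk : m ≤ k) (g : ℕ → ℝ) :
    ∑ r ∈ Finset.Icc j m, (-1 : ℝ) ^ (r - j) * ((k - j).choose (r - j) : ℝ) *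
      ∑ s ∈ Finset.Icc r m, g s * ((k - r).choose (s - r) : ℝ) = g j := by
  have h1 : ∀ r ∈ Finset.Icc j m, (-1 : ℝ) ^ (r - j) * ((k - j).choose (r - j) : ℝ) *
      (∑ s ∈ Finset.Icc r m, g s * ((k - r).choose (s - r) : ℝ))
      = ∑ s ∈ Finset.Icc r m, (-1 : ℝ) ^ (r - j) * ((k - j).choose (r - j) : ℝ) *
          (g s * ((k - r).choose (s - r) : ℝ)) :=
    fun r _ => Finset.mul_sum _ _ _
  rw [Finset.sum_congr rfl h1, swapIcc]
  have h2 : ∀ s ∈ Finset.Icc j m,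
      ∑ r ∈ Finset.Icc j s, (-1 : ℝ) ^ (r - j) * ((k - j).choose (r - j) : ℝ) *
        (g s * ((k - r).choose (s - r) : ℝ))
      = (if j = s then 1 else 0) * g s := by
    intro s hs
    simp only [Finset.mem_Icc] at hs
    rw [← delta1 k j s hs.1 (hs.2.trans hk), Finset.sum_mul]
    exact Finset.sum_congr rfl fun r _ => by ring
  rw [Finset.sum_congr rfl h2]
  simp only [ite_mul, one_mul, zero_mul, Finset.sum_ite_eq, Finset.mem_Icc]
  simp [hj]

/-- A weighted graph of the Johnson scheme `J(2k,k)` with weights `w_0,…,w_m` has integral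
spectrum iff the weights are of the form `w_r = Σ_{j=r}^m (c_j / C(2j,j)) C(k-r, j-r)`
for integers `c_0,…,c_m`. -/
theorem stmt_6 (k m : ℕ) (hm : m ≤ k) (w : ℕ → ℝ)
    (f : ℕ → ℝ)
    (hf : ∀ x, f x = ∑ r ∈ Finset.range (m + 1), w r *
        ∑ j ∈ Finset.range (r + 1), (-1 : ℝ) ^ (r - j) *
          (Nat.choose (2 * j) j : ℝ) * (Nat.choose (k - j) (r - j) : ℝ) *
          (Nat.choose (x + j) (2 * j) : ℝ)) :
    (∀ x ≤ k, ∃ z : ℤ, f x = (z : ℝ)) ↔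
      (∃ c : ℕ → ℤ, ∀ r ≤ m,
        w r = ∑ j ∈ Finset.Icc r m,
          ((c j : ℝ) / (Nat.choose (2 * j) j : ℝ)) * (Nat.choose (k - r) (j - r) : ℝ)) := by
  classical
  set A : ℕ → ℝ := fun j => ∑ r ∈ Finset.Icc j m,
      (-1 : ℝ) ^ (r - j) * ((2 * j).choose j : ℝ) * ((k - j).choose (r - j) : ℝ) * w r with hA
  have hfA : ∀ x, f x = ∑ j ∈ range (m + 1), A j * ((x + j).choose (2 * j) : ℝ) := by
    intro x
    rw [hf x]
    have h1 : ∀ r ∈ range (m + 1), w r * ∑ j ∈ range (r + 1),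
        (-1 : ℝ) ^ (r - j) * ((2 * j).choose j : ℝ) * ((k - j).choose (r - j) : ℝ) *
          ((x + j).choose (2 * j) : ℝ)
        = ∑ j ∈ range (r + 1), w r * ((-1 : ℝ) ^ (r - j) * ((2 * j).choose j : ℝ) *
            ((k - j).choose (r - j) : ℝ) * ((x + j).choose (2 * j) : ℝ)) :=
      fun r _ => Finset.mul_sum _ _ _
    rw [Finset.sum_congr rfl h1, swapRange]
    refine Finset.sum_congr rfl fun j _ => ?_
    simp only [hA]
    rw [Finset.sum_mul]
    exact Finset.sum_congr rfl fun r _ => by ring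
  have hAfact : ∀ j, A j = ((2 * j).choose j : ℝ) *
      ∑ s ∈ Finset.Icc j m, (-1 : ℝ) ^ (s - j) * ((k - j).choose (s - j) : ℝ) * w s := by
    intro j
    simp only [hA]
    rw [Finset.mul_sum]
    exact Finset.sum_congr rfl fun s _ => by ring
  have hbin : ∀ j : ℕ, ((2 * j).choose j : ℝ) ≠ 0 := fun j =>
    Nat.cast_ne_zero.mpr (Nat.choose_pos (by omega)).ne'
  constructor
  · intro h
    have hAint : ∀ j, j ≤ m → ∃ z : ℤ, A j = (z : ℝ) := by
      intro j
      induction j using Nat.strong_induction_on with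
      | _ j ih =>
        intro hjm
        obtain ⟨zf, hzf⟩ := h j (hjm.trans hm)
        obtain ⟨zs, hzs⟩ := sum_isInt (s := range j)
            (g := fun i => A i * ((j + i).choose (2 * i) : ℝ)) (by
          intro i hi
          have hij : i < j := Finset.mem_range.mp hi
          obtain ⟨z, hz⟩ := ih i hij (le_trans hij.le hjm)
          refine ⟨z * ((j + i).choose (2 * i) : ℤ), ?_⟩
          show A i * ((j + i).choose (2 * i) : ℝ) = _
          rw [hz]; push_cast; ring)
        refine ⟨zf - zs, ?_⟩
        have hsplit : f j = (∑ i ∈ range j, A i * ((j + i).choose (2 * i) : ℝ)) + A j := by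
          rw [hfA j]
          have hmj : m + 1 = (j + 1) + (m - j) := by omega
          rw [hmj, Finset.sum_range_add]
          have h0 : ∀ i ∈ range (m - j),
              A (j + 1 + i) * ((j + (j + 1 + i)).choose (2 * (j + 1 + i)) : ℝ) = 0 := by
            intro i _
            have hlt : j + (j + 1 + i) < 2 * (j + 1 + i) := by omega
            rw [Nat.choose_eq_zero_of_lt hlt]
            simp
          rw [Finset.sum_eq_zero h0, add_zero, Finset.sum_range_succ]
          have h1 : (j + j).choose (2 * j) = 1 := by
            rw [two_mul]; exact Nat.choose_self _
          rw [h1]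
          simp
        rw [hsplit, hzs] at hzf
        push_cast
        linarith
    have hAint' : ∀ j, ∃ z : ℤ, j ≤ m → A j = (z : ℝ) := by
      intro j
      by_cases hj : j ≤ m
      · obtain ⟨z, hz⟩ := hAint j hj
        exact ⟨z, fun _ => hz⟩
      · exact ⟨0, fun h' => absurd h' hj⟩
    choose c hc using hAint'
    refine ⟨c, fun r hr => ?_⟩
    rw [← inv1 k m r hr hm w]
    refine Finset.sum_congr rfl fun j hj => ?_
    simp only [Finset.mem_Icc] at hj
    have hinner : ∑ s ∈ Finset.Icc j m, (-1 : ℝ) ^ (s - j) * ((k - j).choose (s - j) : ℝ) * w s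
        = (c j : ℝ) / ((2 * j).choose j : ℝ) := by
      rw [← hc j hj.2, hAfact j, mul_comm, mul_div_assoc, div_self (hbin j), mul_one]
    rw [hinner]
    ring
  · rintro ⟨c, hc⟩ x hx
    have hAval : ∀ j ≤ m, A j = (c j : ℝ) := by
      intro j hj
      have hstep : A j = ((2 * j).choose j : ℝ) *
          ∑ r ∈ Finset.Icc j m, (-1 : ℝ) ^ (r - j) * ((k - j).choose (r - j) : ℝ) *
            ∑ s ∈ Finset.Icc r m,
              (fun s => (c s : ℝ) / ((2 * s).choose s : ℝ)) s * ((k - r).choose (s - r) : ℝ) := by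
        rw [hAfact j, Finset.mul_sum, Finset.mul_sum]
        refine Finset.sum_congr rfl fun r hr => ?_
        simp only [Finset.mem_Icc] at hr
        rw [hc r hr.2]
      rw [hstep, inv2 k m j hj hm (fun s => (c s : ℝ) / ((2 * s).choose s : ℝ))]
      rw [mul_comm, div_mul_cancel₀ _ (hbin j)]
    refine ⟨∑ j ∈ Finset.range (m + 1), c j * ((x + j).choose (2 * j) : ℤ), ?_⟩
    rw [hfA x]
    push_cast
    refine Finset.sum_congr rfl fun j hj => ?_
    rw [hAval j (by simpa [Nat.lt_succ_iff] using hj)]
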